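/- Let B_n(p) = 2π ω_N P(B_N = 0). For any random variable Z with E|Z| < ∞ that is a function of (ε_1, …, ε_N), one has E(Z | B_N = 0) = (1/B_n(p)) ∫_{−πω_N}^{πω_N} E[Z e^{itB_N/ω_N}] dt; moreover 1 ≤ √(2π)/B_n(p) ≤ 1 + ω_N^{−2}. -/

import Mathlib

/-- The probability weight of a configuration of N independent Bernoulli(p)
variables: coordinate j equals 1 (true) with probability p. -/
noncomputable def wt (N : ℕ) (p : ℝ) (ε : Fin N → Bool) : ℝ :=
  ∏ j, if ε j then p else 1 - p

/-- Expectation with respect to N i.i.d. Bernoulli(p) variables. -/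
noncomputable def bexp (N : ℕ) (p : ℝ) (Z : (Fin N → Bool) → ℝ) : ℝ :=
  ∑ ε : Fin N → Bool, wt N p ε * Z ε

open scoped Classical in
/-- Probability of an event under N i.i.d. Bernoulli(p) variables. -/
noncomputable def bprob (N : ℕ) (p : ℝ) (E : (Fin N → Bool) → Prop) : ℝ :=
  ∑ ε : Fin N → Bool, if E ε then wt N p ε else 0

/-- The centered Bernoulli sum B_N = ∑_j (ε_j − p). -/
noncomputable def BN (N : ℕ) (p : ℝ) (ε : Fin N → Bool) : ℝ :=
  ∑ j : Fin N, ((if ε j then (1 : ℝ) else 0) - p)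

open scoped Classical in
/-- The conditional expectation E(Z ∣ B_N = 0). -/
noncomputable def condExpB (N : ℕ) (p : ℝ) (Z : (Fin N → Bool) → ℝ) : ℝ :=
  bexp N p (fun ε => if BN N p ε = 0 then Z ε else 0) /
    bprob N p (fun ε => BN N p ε = 0)


section Lemma51Aux
open Stirling Real Filter Finset
open scoped Topology

open Stirling Real Filter

lemma diff_lower (m : ℕ) :
    1/(12*((m:ℝ)+1)+1) - 1/(12*((m:ℝ)+2)+1) ≤
      Real.log (stirlingSeq (m+1)) - Real.log (stirlingSeq (m+2)) := by
  have h := le_hasSum (log_stirlingSeq_diff_hasSum m) 0 (fun j _ => by positivity)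
  refine le_trans ?_ h
  push_cast
  rw [pow_one, div_pow, one_pow, div_mul_div_comm, one_mul]
  rw [div_sub_div _ _ (by positivity) (by positivity),
    div_le_div_iff₀ (by positivity) (by positivity)]
  nlinarith [sq_nonneg ((m:ℝ)), Nat.cast_nonneg (α := ℝ) m]

lemma diff_upper (m : ℕ) :
    Real.log (stirlingSeq (m+1)) - Real.log (stirlingSeq (m+2)) ≤
      1/(12*((m:ℝ)+1)) - 1/(12*((m:ℝ)+2)) := by
  set x : ℝ := ((1:ℝ) / (2 * ((m+1 : ℕ) : ℝ) + 1)) ^ 2 with hxdef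
  have hx0 : (0:ℝ) ≤ x := sq_nonneg _
  have hx1 : x < 1 := by
    rw [hxdef, div_pow, one_pow, div_lt_one (by positivity)]
    push_cast; nlinarith [Nat.cast_nonneg (α := ℝ) m]
  have g0 := (hasSum_geometric_of_lt_one hx0 hx1).mul_left x
  simp_rw [← _root_.pow_succ'] at g0
  have g := g0.mul_left (1/3 : ℝ)
  have hle := hasSum_le (fun k => ?_) (log_stirlingSeq_diff_hasSum m) g
  · refine hle.trans (le_of_eq ?_)
    rw [hxdef]
    push_cast
    have h1 : (0:ℝ) < 2 * ((m:ℝ)+1) + 1 := by positivity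
    have h2 : (1:ℝ) - (1 / (2 * ((m:ℝ)+1) + 1)) ^ 2 ≠ 0 := by
      have : ((1:ℝ) / (2 * ((m:ℝ)+1) + 1)) ^ 2 < 1 := by
        rw [div_pow, one_pow, div_lt_one (by positivity)]
        nlinarith [Nat.cast_nonneg (α := ℝ) m]
      linarith
    have h3 : (24 + (m:ℝ) * 36 + (m:ℝ) ^ 2 * 12) ≠ 0 := by positivity
    field_simp [h2, h3]
    ring_nf
    field_simp [h3]
    ring
  · show (1:ℝ) / (2 * ((k+1:ℕ):ℝ) + 1) * x ^ (k+1) ≤ 1/3 * x ^ (k+1)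
    refine mul_le_mul_of_nonneg_right ?_ (pow_nonneg hx0 _)
    push_cast
    rw [div_le_div_iff₀ (by positivity) (by norm_num)]
    nlinarith [Nat.cast_nonneg (α := ℝ) k]
open Stirling Real Filter
open scoped Topology

lemma tendsto_log_stirl :
    Tendsto (fun k : ℕ => Real.log (stirlingSeq (k+1))) atTop (𝓝 (Real.log (Real.sqrt π))) := by
  have h0 : Tendsto (fun k : ℕ => stirlingSeq (k+1)) atTop (𝓝 (Real.sqrt π)) :=
    tendsto_stirlingSeq_sqrt_pi.comp (tendsto_add_atTop_nat 1)
  exact ((Real.continuousAt_log (by positivity)).tendsto).comp h0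

lemma tendsto_aux (c : ℝ) :
    Tendsto (fun k : ℕ => 1/(12*((k:ℝ)+1)+c)) atTop (𝓝 0) := by
  have h1 : Tendsto (fun k : ℕ => 12*((k:ℝ)+1)+c) atTop atTop := by
    have := tendsto_atTop_add_const_right atTop (12+c)
      ((tendsto_natCast_atTop_atTop (R := ℝ)).const_mul_atTop (by norm_num : (0:ℝ) < 12))
    exact this.congr (fun k => by ring)
  exact h1.inv_tendsto_atTop.congr (fun k => (one_div _).symm)

lemma robbins_up (k : ℕ) : stirlingSeq (k+1) ≤ Real.sqrt π * Real.exp (1/(12*((k:ℝ)+1))) := by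
  have hmono : Monotone (fun k : ℕ => Real.log (stirlingSeq (k+1)) - 1/(12*((k:ℝ)+1))) := by
    apply monotone_nat_of_le_succ
    intro n
    have := diff_upper n
    have e : ((n:ℝ)+1+1) = (n:ℝ)+2 := by ring
    push_cast
    rw [e]
    linarith
  have htend : Tendsto (fun k : ℕ => Real.log (stirlingSeq (k+1)) - 1/(12*((k:ℝ)+1))) atTop
      (𝓝 (Real.log (Real.sqrt π))) := by
    have h2 : Tendsto (fun k : ℕ => 1/(12*((k:ℝ)+1))) atTop (𝓝 (0:ℝ)) :=
      (tendsto_aux 0).congr (fun k => by norm_num)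
    simpa using tendsto_log_stirl.sub h2
  have h := hmono.ge_of_tendsto htend k
  have h2 : Real.log (stirlingSeq (k+1)) ≤ Real.log (Real.sqrt π) + 1/(12*((k:ℝ)+1)) := by
    have := h; linarith [this]
  calc stirlingSeq (k+1) = Real.exp (Real.log (stirlingSeq (k+1))) :=
        (Real.exp_log (stirlingSeq'_pos k)).symm
    _ ≤ Real.exp (Real.log (Real.sqrt π) + 1/(12*((k:ℝ)+1))) := Real.exp_le_exp.mpr h2
    _ = Real.sqrt π * Real.exp (1/(12*((k:ℝ)+1))) := by
        rw [Real.exp_add, Real.exp_log (by positivity)]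

lemma robbins_lo (k : ℕ) : Real.sqrt π * Real.exp (1/(12*((k:ℝ)+1)+1)) ≤ stirlingSeq (k+1) := by
  have hanti : Antitone (fun k : ℕ => Real.log (stirlingSeq (k+1)) - 1/(12*((k:ℝ)+1)+1)) := by
    apply antitone_nat_of_succ_le
    intro n
    have := diff_lower n
    have e : ((n:ℝ)+1+1) = (n:ℝ)+2 := by ring
    push_cast
    rw [e]
    linarith
  have htend : Tendsto (fun k : ℕ => Real.log (stirlingSeq (k+1)) - 1/(12*((k:ℝ)+1)+1)) atTop
      (𝓝 (Real.log (Real.sqrt π))) := by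
    simpa using tendsto_log_stirl.sub (tendsto_aux 1)
  have h := hanti.le_of_tendsto htend k
  have h2 : Real.log (Real.sqrt π) + 1/(12*((k:ℝ)+1)+1) ≤ Real.log (stirlingSeq (k+1)) := by
    have := h; linarith [this]
  calc Real.sqrt π * Real.exp (1/(12*((k:ℝ)+1)+1))
      = Real.exp (Real.log (Real.sqrt π) + 1/(12*((k:ℝ)+1)+1)) := by
        rw [Real.exp_add, Real.exp_log (by positivity)]
    _ ≤ Real.exp (Real.log (stirlingSeq (k+1))) := Real.exp_le_exp.mpr h2
    _ = stirlingSeq (k+1) := Real.exp_log (stirlingSeq'_pos k)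
open Stirling Real Filter

lemma robbins_up' (k : ℕ) (hk : 1 ≤ k) :
    stirlingSeq k ≤ Real.sqrt π * Real.exp (1/(12*(k:ℝ))) := by
  obtain ⟨j, rfl⟩ := Nat.exists_eq_add_of_le hk
  rw [add_comm 1 j]
  push_cast
  exact robbins_up j

lemma robbins_lo' (k : ℕ) (hk : 1 ≤ k) :
    Real.sqrt π * Real.exp (1/(12*(k:ℝ)+1)) ≤ stirlingSeq k := by
  obtain ⟨j, rfl⟩ := Nat.exists_eq_add_of_le hk
  rw [add_comm 1 j]
  push_cast
  exact robbins_lo j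

lemma stirl_pos (k : ℕ) (hk : 1 ≤ k) : 0 < stirlingSeq k := by
  obtain ⟨j, rfl⟩ := Nat.exists_eq_add_of_le hk
  rw [add_comm]
  exact stirlingSeq'_pos j

lemma fact_eq (k : ℕ) (hk : 1 ≤ k) :
    (Nat.factorial k : ℝ) = stirlingSeq k * (Real.sqrt (2*k) * ((k:ℝ)/Real.exp 1)^k) := by
  have hd : (0:ℝ) < Real.sqrt (2*k) * ((k:ℝ)/Real.exp 1)^k := by
    have : (0:ℝ) < (k:ℝ) := by exact_mod_cast hk
    positivity
  rw [stirlingSeq, div_mul_cancel₀ _ hd.ne']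

lemma ratio_eq (n m : ℕ) (hn : 1 ≤ n) (hm : 1 ≤ m) :
    ((n+m).choose n : ℝ) * ((n:ℝ)/((n+m:ℕ):ℝ))^n * ((m:ℝ)/((n+m:ℕ):ℝ))^m
      = stirlingSeq (n+m) / (stirlingSeq n * stirlingSeq m)
        * (Real.sqrt (2*(n+m:ℕ)) / (Real.sqrt (2*n) * Real.sqrt (2*m))) := by
  have hn0 : (0:ℝ) < n := by exact_mod_cast hn
  have hm0 : (0:ℝ) < m := by exact_mod_cast hm
  have hN0 : (0:ℝ) < ((n+m:ℕ):ℝ) := by push_cast; linarith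
  have h1 : ((n+m).choose n : ℝ) * (Nat.factorial n : ℝ) * (Nat.factorial m : ℝ) = (Nat.factorial (n+m) : ℝ) := by
    have := Nat.choose_mul_factorial_mul_factorial (Nat.le_add_right n m)
    rw [Nat.add_sub_cancel_left] at this
    exact_mod_cast congrArg (Nat.cast (R := ℝ)) this
  have hb : (((n+m:ℕ):ℝ)/Real.exp 1)^(n+m) * ((n:ℝ)/((n+m:ℕ):ℝ))^n * ((m:ℝ)/((n+m:ℕ):ℝ))^m
      = ((n:ℝ)/Real.exp 1)^n * ((m:ℝ)/Real.exp 1)^m := by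
    have e1 : (((n+m:ℕ):ℝ)/Real.exp 1)^n * ((n:ℝ)/((n+m:ℕ):ℝ))^n = ((n:ℝ)/Real.exp 1)^n := by
      rw [← mul_pow]; congr 1; field_simp
    have e2 : (((n+m:ℕ):ℝ)/Real.exp 1)^m * ((m:ℝ)/((n+m:ℕ):ℝ))^m = ((m:ℝ)/Real.exp 1)^m := by
      rw [← mul_pow]; congr 1; field_simp
    rw [pow_add]
    linear_combination ((((n+m:ℕ):ℝ)/Real.exp 1)^m * ((m:ℝ)/((n+m:ℕ):ℝ))^m) * e1
      + ((n:ℝ)/Real.exp 1)^n * e2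
  have hfn := fact_eq n hn
  have hfm := fact_eq m hm
  have hfN := fact_eq (n+m) (by omega)
  have hsn := stirl_pos n hn
  have hsm := stirl_pos m hm
  have hsN := stirl_pos (n+m) (by omega)
  have han : (0:ℝ) < Real.sqrt (2*n) := by positivity
  have ham : (0:ℝ) < Real.sqrt (2*m) := by positivity
  have haN : (0:ℝ) < Real.sqrt (2*((n+m:ℕ):ℝ)) := by positivity
  have hbn : (0:ℝ) < ((n:ℝ)/Real.exp 1)^n := by positivity
  have hbm : (0:ℝ) < ((m:ℝ)/Real.exp 1)^m := by positivity
  have hbN : (0:ℝ) < (((n+m:ℕ):ℝ)/Real.exp 1)^(n+m) := by positivity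
  rw [hfn, hfm, hfN] at h1
  have hc : ((n+m).choose n : ℝ)
      = stirlingSeq (n+m) * (Real.sqrt (2*((n+m:ℕ):ℝ)) * (((n+m:ℕ):ℝ)/Real.exp 1)^(n+m))
        / (stirlingSeq n * (Real.sqrt (2*(n:ℝ)) * ((n:ℝ)/Real.exp 1)^n)
          * (stirlingSeq m * (Real.sqrt (2*(m:ℝ)) * ((m:ℝ)/Real.exp 1)^m))) := by
    rw [eq_div_iff (by positivity)]
    linear_combination h1
  rw [hc]
  set SN := stirlingSeq (n+m) with hSNd
  set Sn := stirlingSeq n with hSnd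
  set Sm := stirlingSeq m with hSmd
  set AN := Real.sqrt (2*((n+m:ℕ):ℝ)) with hANd
  set An := Real.sqrt (2*(n:ℝ)) with hAnd
  set Am := Real.sqrt (2*(m:ℝ)) with hAmd
  set BN := (((n+m:ℕ):ℝ)/Real.exp 1)^(n+m) with hBNd
  set Bn := ((n:ℝ)/Real.exp 1)^n with hBnd
  set Bm := ((m:ℝ)/Real.exp 1)^m with hBmd
  set Rn := ((n:ℝ)/((n+m:ℕ):ℝ))^n with hRnd
  set Rm := ((m:ℝ)/((n+m:ℕ):ℝ))^m with hRmd
  rw [div_mul_div_comm, div_mul_eq_mul_div, div_mul_eq_mul_div, div_eq_div_iff (by positivity) (by positivity)]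
  linear_combination (SN * AN * Sn * Sm * An * Am) * hb
open Stirling Real Filter

lemma key_bounds (n m : ℕ) (hn : 1 ≤ n) (hm : 1 ≤ m) :
    (Real.sqrt (2*π) * Real.sqrt ((n:ℝ)*m/((n+m:ℕ):ℝ)) *
      (((n+m).choose n : ℝ) * ((n:ℝ)/((n+m:ℕ):ℝ))^n * ((m:ℝ)/((n+m:ℕ):ℝ))^m) ≤ 1) ∧
    (1 ≤ Real.sqrt (2*π) * Real.sqrt ((n:ℝ)*m/((n+m:ℕ):ℝ)) *
      (((n+m).choose n : ℝ) * ((n:ℝ)/((n+m:ℕ):ℝ))^n * ((m:ℝ)/((n+m:ℕ):ℝ))^m)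
      * (1 + ((n+m:ℕ):ℝ)/((n:ℝ)*m))) := by
  have hn0 : (0:ℝ) < n := by exact_mod_cast hn
  have hm0 : (0:ℝ) < m := by exact_mod_cast hm
  have hn1 : (1:ℝ) ≤ n := by exact_mod_cast hn
  have hm1 : (1:ℝ) ≤ m := by exact_mod_cast hm
  have hN0 : (0:ℝ) < ((n+m:ℕ):ℝ) := by push_cast; linarith
  have hsn := stirl_pos n hn
  have hsm := stirl_pos m hm
  have hsN := stirl_pos (n+m) (by omega)
  have hsqpi : (0:ℝ) < Real.sqrt π := Real.sqrt_pos.mpr Real.pi_pos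
  have hππ : Real.sqrt π ^ 2 = π := Real.sq_sqrt Real.pi_pos.le
  -- collapse of square roots
  have hW : Real.sqrt (2*π) * Real.sqrt ((n:ℝ)*m/((n+m:ℕ):ℝ)) *
      (Real.sqrt (2*((n+m:ℕ):ℝ)) / (Real.sqrt (2*(n:ℝ)) * Real.sqrt (2*(m:ℝ)))) =
      Real.sqrt π := by
    rw [← Real.sqrt_mul (by positivity), ← Real.sqrt_mul (by positivity),
      ← Real.sqrt_div (by positivity), ← Real.sqrt_mul (by positivity)]
    congr 1
    field_simp
  have hT : Real.sqrt (2*π) * Real.sqrt ((n:ℝ)*m/((n+m:ℕ):ℝ)) *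
      (((n+m).choose n : ℝ) * ((n:ℝ)/((n+m:ℕ):ℝ))^n * ((m:ℝ)/((n+m:ℕ):ℝ))^m)
      = Real.sqrt π * stirlingSeq (n+m) / (stirlingSeq n * stirlingSeq m) := by
    rw [ratio_eq n m hn hm, ← hW]
    ring
  constructor
  · rw [hT]
    have hup : Real.sqrt π * stirlingSeq (n+m) / (stirlingSeq n * stirlingSeq m) ≤
        Real.sqrt π * (Real.sqrt π * Real.exp (1/(12*((n+m:ℕ):ℝ)))) /
          ((Real.sqrt π * Real.exp (1/(12*(n:ℝ)+1))) *
           (Real.sqrt π * Real.exp (1/(12*(m:ℝ)+1)))) :=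
      div_le_div₀ (by positivity)
        (mul_le_mul_of_nonneg_left (robbins_up' (n+m) (by omega)) hsqpi.le)
        (by positivity)
        (mul_le_mul (robbins_lo' n hn) (robbins_lo' m hm) (by positivity) hsn.le)
    refine hup.trans ?_
    have heq : Real.sqrt π * (Real.sqrt π * Real.exp (1/(12*((n+m:ℕ):ℝ)))) /
          ((Real.sqrt π * Real.exp (1/(12*(n:ℝ)+1))) *
           (Real.sqrt π * Real.exp (1/(12*(m:ℝ)+1))))
        = Real.exp (1/(12*((n+m:ℕ):ℝ)) - 1/(12*(n:ℝ)+1) - 1/(12*(m:ℝ)+1)) := by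
      rw [Real.exp_sub, Real.exp_sub]
      field_simp
    rw [heq, Real.exp_le_one_iff]
    have h1 : 1/(12*((n+m:ℕ):ℝ)) ≤ 1/(12*(n:ℝ)+1) := by
      apply one_div_le_one_div_of_le (by positivity)
      push_cast; linarith
    have h2 : (0:ℝ) ≤ 1/(12*(m:ℝ)+1) := by positivity
    linarith
  · set x : ℝ := ((n+m:ℕ):ℝ)/((n:ℝ)*m) with hxd
    have hx0 : 0 < x := by positivity
    have hlo : Real.exp (-(x/12)) ≤
        Real.sqrt π * stirlingSeq (n+m) / (stirlingSeq n * stirlingSeq m) := by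
      have hdn : Real.sqrt π * (Real.sqrt π * Real.exp (1/(12*((n+m:ℕ):ℝ)+1))) /
          ((Real.sqrt π * Real.exp (1/(12*(n:ℝ)))) *
           (Real.sqrt π * Real.exp (1/(12*(m:ℝ)))))
          = Real.exp (1/(12*((n+m:ℕ):ℝ)+1) - 1/(12*(n:ℝ)) - 1/(12*(m:ℝ))) := by
        rw [Real.exp_sub, Real.exp_sub]
        field_simp
      have hstep : Real.exp (-(x/12)) ≤
          Real.exp (1/(12*((n+m:ℕ):ℝ)+1) - 1/(12*(n:ℝ)) - 1/(12*(m:ℝ))) := by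
        rw [Real.exp_le_exp]
        have e3 : 1/(12*(n:ℝ)) + 1/(12*(m:ℝ)) = x/12 := by
          rw [hxd]; push_cast; field_simp; ring
        have h4 : (0:ℝ) ≤ 1/(12*((n+m:ℕ):ℝ)+1) := by positivity
        linarith
      refine hstep.trans ?_
      rw [← hdn]
      exact div_le_div₀ (mul_nonneg hsqpi.le hsN.le)
        (mul_le_mul_of_nonneg_left (robbins_lo' (n+m) (by omega)) hsqpi.le)
        (mul_pos hsn hsm)
        (mul_le_mul (robbins_up' n hn) (robbins_up' m hm) hsm.le (by positivity))
    have hx2 : x ≤ 2 := by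
      rw [hxd, div_le_iff₀ (by positivity)]
      push_cast
      nlinarith [mul_nonneg (sub_nonneg.mpr hn1) (sub_nonneg.mpr hm1)]
    have hexp : Real.exp (x/12) ≤ 1 + x := by
      have h5 : (0:ℝ) < 1 - x/12 := by linarith
      have h6 := Real.add_one_le_exp (-(x/12))
      rw [Real.exp_neg] at h6
      have h7 : Real.exp (x/12) * (1 - x/12) ≤ 1 := by
        have := mul_le_mul_of_nonneg_left h6 (Real.exp_pos (x/12)).le
        rwa [mul_inv_cancel₀ (Real.exp_pos (x/12)).ne', neg_add_eq_sub] at this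
      nlinarith [Real.exp_pos (x/12)]
    have h8 : 1 ≤ Real.exp (-(x/12)) * (1 + x) := by
      rw [Real.exp_neg, inv_mul_eq_div, le_div_iff₀ (Real.exp_pos _), one_mul]
      exact hexp
    rw [hT]
    calc (1:ℝ) ≤ Real.exp (-(x/12)) * (1 + x) := h8
      _ ≤ Real.sqrt π * stirlingSeq (n+m) / (stirlingSeq n * stirlingSeq m) * (1 + x) :=
          mul_le_mul_of_nonneg_right hlo (by linarith)

open Finset

lemma card_filter_eq (N : ℕ) (ε : Fin N → Bool) :
    BN N ((0:ℝ)) ε = 0 → True := fun _ => trivial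

lemma wt_eq (N : ℕ) (p : ℝ) (ε : Fin N → Bool) :
    wt N p ε = p ^ (univ.filter (fun j => ε j = true)).card
      * (1-p) ^ (N - (univ.filter (fun j => ε j = true)).card) := by
  classical
  rw [wt]
  rw [Finset.prod_ite (fun _ => p) (fun _ => 1-p)]
  rw [Finset.prod_const, Finset.prod_const]
  have h1 : (univ.filter (fun j => (ε j : Prop))) = univ.filter (fun j => ε j = true) := by
    apply Finset.filter_congr
    intro j _
    simp
  have h2 : (univ.filter (fun j => ¬(ε j : Prop))).card
      = N - (univ.filter (fun j => ε j = true)).card := by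
    have := Finset.card_filter_add_card_filter_not
      (s := (univ : Finset (Fin N))) (p := fun j => (ε j : Prop))
    rw [Finset.card_univ, Fintype.card_fin] at this
    rw [h1] at this
    omega
  rw [h1, h2]

lemma sum_boole' (N : ℕ) (ε : Fin N → Bool) :
    ∑ j : Fin N, (if ε j then (1:ℝ) else 0) = (univ.filter (fun j => ε j = true)).card := by
  classical
  rw [Finset.sum_boole]

lemma BN_eq (N n : ℕ) (hN : 0 < N) (ε : Fin N → Bool) :
    BN N ((n:ℝ)/N) ε = ((univ.filter (fun j => ε j = true)).card : ℝ) - n := by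
  rw [BN, Finset.sum_sub_distrib, sum_boole' N ε, Finset.sum_const, Finset.card_univ,
    Fintype.card_fin, nsmul_eq_mul]
  have : (N:ℝ) ≠ 0 := by positivity
  field_simp

lemma BN_zero_iff (N n : ℕ) (hN : 0 < N) (ε : Fin N → Bool) :
    BN N ((n:ℝ)/N) ε = 0 ↔ (univ.filter (fun j => ε j = true)).card = n := by
  rw [BN_eq N n hN, sub_eq_zero]
  exact_mod_cast Nat.cast_inj (R := ℝ)

lemma count_card (N n : ℕ) :
    (univ.filter (fun ε : Fin N → Bool => (univ.filter (fun j => ε j = true)).card = n)).card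
      = N.choose n := by
  classical
  have hpc : (Finset.powersetCard n (univ : Finset (Fin N))).card = N.choose n := by
    rw [Finset.card_powersetCard, Finset.card_univ, Fintype.card_fin]
  rw [← hpc]
  apply Finset.card_bij (fun ε _ => univ.filter (fun j => ε j = true))
  · intro ε hε
    rw [Finset.mem_powersetCard]
    exact ⟨Finset.filter_subset _ _, (Finset.mem_filter.mp hε).2⟩
  · intro ε₁ h₁ ε₂ h₂ h
    funext j
    have := Finset.ext_iff.mp h j
    simp only [Finset.mem_filter, Finset.mem_univ, true_and] at this
    cases hj : ε₁ j <;> cases hj2 : ε₂ j <;> simp_all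
  · intro s hs
    refine ⟨fun j => decide (j ∈ s), ?_, ?_⟩
    · rw [Finset.mem_filter]
      refine ⟨Finset.mem_univ _, ?_⟩
      rw [Finset.mem_powersetCard] at hs
      rw [← hs.2]
      congr 1
      ext j
      simp
    · ext j
      simp [Finset.mem_filter]

lemma bprob_eq (N n : ℕ) (hN : 0 < N) :
    bprob N ((n:ℝ)/N) (fun ε => BN N ((n:ℝ)/N) ε = 0)
      = (N.choose n : ℝ) * ((n:ℝ)/N)^n * (1-(n:ℝ)/N)^(N-n) := by
  classical
  rw [bprob]
  have step : ∀ ε : Fin N → Bool,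
      (if BN N ((n:ℝ)/N) ε = 0 then wt N ((n:ℝ)/N) ε else 0)
        = (if (univ.filter (fun j => ε j = true)).card = n
            then ((n:ℝ)/N)^n * (1-(n:ℝ)/N)^(N-n) else 0) := by
    intro ε
    rw [if_congr (BN_zero_iff N n hN ε) rfl rfl]
    by_cases h : (univ.filter (fun j => ε j = true)).card = n
    · rw [if_pos h, if_pos h, wt_eq, h]
    · rw [if_neg h, if_neg h]
  rw [Finset.sum_congr rfl (fun ε _ => step ε)]
  rw [Finset.sum_ite, Finset.sum_const_zero, add_zero, Finset.sum_const, count_card,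
    nsmul_eq_mul]
  ring

open intervalIntegral Complex

lemma int_exp_zero (ω : ℝ) :
    (∫ t : ℝ in (-(Real.pi * ω))..(Real.pi * ω),
      Complex.exp (Complex.I * (t:ℂ) * (0:ℂ) / (ω:ℂ))) = (2*Real.pi*ω : ℝ) := by
  simp only [mul_zero, zero_div, Complex.exp_zero]
  rw [intervalIntegral.integral_const]
  push_cast
  ring_nf
  simp

lemma int_exp_ne (ω : ℝ) (hω : 0 < ω) (z : ℤ) (hz : z ≠ 0) :
    (∫ t : ℝ in (-(Real.pi * ω))..(Real.pi * ω),
      Complex.exp (Complex.I * (t:ℂ) * ((z:ℝ):ℂ) / (ω:ℂ))) = 0 := by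
  have hω' : (ω:ℂ) ≠ 0 := Complex.ofReal_ne_zero.mpr hω.ne'
  have hc : (Complex.I * ((z:ℝ):ℂ) / (ω:ℂ)) ≠ 0 := by
    apply div_ne_zero
    · apply mul_ne_zero Complex.I_ne_zero
      push_cast
      exact_mod_cast Int.cast_ne_zero.mpr hz
    · exact hω'
  have hrw : ∀ t : ℝ, Complex.I * (t:ℂ) * ((z:ℝ):ℂ) / (ω:ℂ)
      = (Complex.I * ((z:ℝ):ℂ) / (ω:ℂ)) * (t:ℂ) := fun t => by ring
  rw [intervalIntegral.integral_congr (fun t _ => by rw [hrw t])]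
  rw [integral_exp_mul_complex hc]
  have e1 : (Complex.I * ((z:ℝ):ℂ) / (ω:ℂ)) * ((Real.pi * ω : ℝ) : ℂ)
      = Complex.I * Real.pi * (z:ℂ) := by
    push_cast
    field_simp
  have e2 : (Complex.I * ((z:ℝ):ℂ) / (ω:ℂ)) * ((-(Real.pi * ω) : ℝ) : ℂ)
      = -(Complex.I * Real.pi * (z:ℂ)) := by
    push_cast
    field_simp
  rw [e1, e2]
  have key : Complex.exp (Complex.I * Real.pi * (z:ℂ))
      = Complex.exp (-(Complex.I * Real.pi * (z:ℂ))) := by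
    have : Complex.exp (Complex.I * Real.pi * (z:ℂ))
        = Complex.exp (-(Complex.I * Real.pi * (z:ℂ))) * Complex.exp ((z:ℤ) * (2*Real.pi*Complex.I)) := by
      rw [← Complex.exp_add]
      congr 1
      push_cast
      ring
    rw [this, Complex.exp_int_mul_two_pi_mul_I, mul_one]
  rw [key, sub_self, zero_div]


open Finset

open scoped Classical in
lemma formula_aux (N n : ℕ) (hN : 0 < N) (ω : ℝ) (hω : 0 < ω)
    (Z : (Fin N → Bool) → ℝ) :
    (∫ t : ℝ in (-(Real.pi * ω))..(Real.pi * ω),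
        ∑ ε : Fin N → Bool, (wt N ((n:ℝ)/N) ε : ℂ) * (Z ε : ℂ) *
          Complex.exp (Complex.I * (t:ℂ) * ((BN N ((n:ℝ)/N) ε : ℝ) : ℂ) / (ω:ℂ)))
      = ((2*Real.pi*ω : ℝ) : ℂ) *
        ((bexp N ((n:ℝ)/N) (fun ε => if BN N ((n:ℝ)/N) ε = 0 then Z ε else 0) : ℝ) : ℂ) := by
  rw [intervalIntegral.integral_finset_sum]
  swap
  · intro ε _
    apply Continuous.intervalIntegrable
    fun_prop
  have hterm : ∀ ε : Fin N → Bool,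
      (∫ t : ℝ in (-(Real.pi * ω))..(Real.pi * ω),
        (wt N ((n:ℝ)/N) ε : ℂ) * (Z ε : ℂ) *
          Complex.exp (Complex.I * (t:ℂ) * ((BN N ((n:ℝ)/N) ε : ℝ) : ℂ) / (ω:ℂ)))
      = (if BN N ((n:ℝ)/N) ε = 0
          then (wt N ((n:ℝ)/N) ε : ℂ) * (Z ε : ℂ) * ((2*Real.pi*ω : ℝ) : ℂ) else 0) := by
    intro ε
    have e : (∫ t : ℝ in (-(Real.pi * ω))..(Real.pi * ω),
        (wt N ((n:ℝ)/N) ε : ℂ) * (Z ε : ℂ) *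
          Complex.exp (Complex.I * (t:ℂ) * ((BN N ((n:ℝ)/N) ε : ℝ) : ℂ) / (ω:ℂ)))
        = (wt N ((n:ℝ)/N) ε : ℂ) * (Z ε : ℂ) *
          (∫ t : ℝ in (-(Real.pi * ω))..(Real.pi * ω),
            Complex.exp (Complex.I * (t:ℂ) * ((BN N ((n:ℝ)/N) ε : ℝ) : ℂ) / (ω:ℂ))) := by
      rw [← intervalIntegral.integral_const_mul]
    rw [e]
    by_cases hB : BN N ((n:ℝ)/N) ε = 0
    · rw [if_pos hB, hB]
      simp only [Complex.ofReal_zero]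
      rw [int_exp_zero ω]
    · rw [if_neg hB]
      set c := (univ.filter (fun j => ε j = true)).card with hc
      have hBz : BN N ((n:ℝ)/N) ε = (((c : ℤ) - (n : ℤ) : ℤ) : ℝ) := by
        rw [BN_eq N n hN ε]
        push_cast
        ring
      have hzne : ((c : ℤ) - (n : ℤ)) ≠ 0 := by
        intro h
        apply hB
        rw [hBz, h]
        norm_num
      rw [hBz, int_exp_ne ω hω _ hzne]
      ring
  rw [Finset.sum_congr rfl (fun ε _ => hterm ε)]
  rw [bexp]
  push_cast
  rw [Finset.mul_sum]
  apply Finset.sum_congr rfl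
  intro ε _
  by_cases hB : BN N ((n:ℝ)/N) ε = 0
  · rw [if_pos hB, if_pos hB]
    ring
  · rw [if_neg hB, if_neg hB]
    simp

end Lemma51Aux
/-- Lemma 5.1: a Fourier inversion formula for conditional expectations given
B_N = 0, and bounds on B_n(p) = 2π ω_N P(B_N = 0). -/
theorem lemma51 :
    ∀ (N n : ℕ), 2 ≤ N → 1 ≤ n → n < N →
      ∀ p q ω : ℝ, p = (n : ℝ) / N → q = 1 - p →
        0 ≤ ω → ω ^ 2 = (N : ℝ) * p * q →
        ∀ Bn : ℝ, Bn = 2 * Real.pi * ω * bprob N p (fun ε => BN N p ε = 0) →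
          (∀ Z : (Fin N → Bool) → ℝ,
            (condExpB N p Z : ℂ) =
              (Bn : ℂ)⁻¹ *
                ∫ t in (-(Real.pi * ω))..(Real.pi * ω),
                  ∑ ε : Fin N → Bool,
                    (wt N p ε : ℂ) * (Z ε : ℂ) *
                      Complex.exp (Complex.I * (t : ℂ) * (BN N p ε : ℂ) / (ω : ℂ))) ∧
          1 ≤ Real.sqrt (2 * Real.pi) / Bn ∧
          Real.sqrt (2 * Real.pi) / Bn ≤ 1 + (ω ^ 2)⁻¹ := by
  intro N n hN hn hnN p q ω hp hq hω0 hω2 Bn hBn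
  obtain ⟨m, rfl⟩ : ∃ m, N = n + m := ⟨N - n, by omega⟩
  have hm : 1 ≤ m := by omega
  have hn0 : (0:ℝ) < n := by exact_mod_cast hn
  have hm0 : (0:ℝ) < m := by exact_mod_cast hm
  have hN0 : (0:ℝ) < ((n+m:ℕ):ℝ) := by push_cast; linarith
  have hNne : ((n+m:ℕ):ℝ) ≠ 0 := hN0.ne'
  subst hp hq hBn
  have hq' : 1 - (n:ℝ)/((n+m:ℕ):ℝ) = (m:ℝ)/((n+m:ℕ):ℝ) := by
    push_cast
    field_simp
    ring
  have hω2' : ω^2 = (n:ℝ)*m/((n+m:ℕ):ℝ) := by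
    rw [hω2, hq']
    push_cast
    field_simp
  have hωne : ω ≠ 0 := by
    intro h
    rw [h] at hω2'
    have h2 : (0:ℝ) < (n:ℝ)*m/((n+m:ℕ):ℝ) := by positivity
    rw [← hω2'] at h2
    norm_num at h2
  have hωpos : 0 < ω := lt_of_le_of_ne hω0 (Ne.symm hωne)
  have hωeq : ω = Real.sqrt ((n:ℝ)*m/((n+m:ℕ):ℝ)) := by
    rw [← Real.sqrt_sq hω0, hω2']
  set p : ℝ := (n:ℝ)/((n+m:ℕ):ℝ) with hpd
  set P : ℝ := bprob (n+m) p (fun ε => BN (n+m) p ε = 0) with hPd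
  have hPe : P = ((n+m).choose n : ℝ) * p^n * ((m:ℝ)/((n+m:ℕ):ℝ))^m := by
    rw [hPd, bprob_eq (n+m) n (by omega), hq']
    congr 2
    omega
  have hPpos : 0 < P := by
    rw [hPe]
    have hch := Nat.choose_pos (show n ≤ n+m by omega)
    have : (0:ℝ) < ((n+m).choose n : ℝ) := by exact_mod_cast hch
    positivity
  have hpine : Real.pi ≠ 0 := Real.pi_ne_zero
  constructor
  · -- the Fourier inversion formula
    intro Z
    rw [formula_aux (n+m) n (by omega) ω hωpos Z]
    rw [show condExpB (n+m) p Z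
        = bexp (n+m) p (fun ε => if BN (n+m) p ε = 0 then Z ε else 0) / P from rfl]
    rw [Complex.ofReal_div]
    have gen : ∀ X : ℂ, X / ((P:ℝ):ℂ) =
        ((2*Real.pi*ω*P : ℝ):ℂ)⁻¹ * (((2*Real.pi*ω : ℝ):ℂ) * X) := by
      intro X
      have hc : ((2 * Real.pi * ω * P : ℝ) : ℂ) = ((2*Real.pi*ω : ℝ):ℂ) * ((P:ℝ):ℂ) := by
        push_cast; ring
      have ha : ((2*Real.pi*ω : ℝ) : ℂ) ≠ 0 := Complex.ofReal_ne_zero.mpr (by positivity)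
      have hb : ((P : ℝ) : ℂ) ≠ 0 := Complex.ofReal_ne_zero.mpr hPpos.ne'
      rw [hc, mul_inv]
      field_simp
    exact gen _
  · -- the bounds
    have hkey := key_bounds n m hn hm
    set T : ℝ := Real.sqrt (2*Real.pi) * Real.sqrt ((n:ℝ)*m/((n+m:ℕ):ℝ)) *
      (((n+m).choose n : ℝ) * ((n:ℝ)/((n+m:ℕ):ℝ))^n * ((m:ℝ)/((n+m:ℕ):ℝ))^m) with hTd
    have hTP : T = Real.sqrt (2*Real.pi) * ω * P := by
      rw [hTd, hPe, hωeq]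
    have hT0 : 0 < T := by
      rw [hTP]
      have : (0:ℝ) < Real.sqrt (2*Real.pi) := Real.sqrt_pos.mpr (by positivity)
      positivity
    have hBnT : 2 * Real.pi * ω * P = Real.sqrt (2*Real.pi) * T := by
      rw [hTP, ← mul_assoc, ← mul_assoc, Real.mul_self_sqrt (by positivity)]
    have hsq2pi : (0:ℝ) < Real.sqrt (2*Real.pi) := Real.sqrt_pos.mpr (by positivity)
    have hfrac : Real.sqrt (2*Real.pi) / (2 * Real.pi * ω * P) = 1 / T := by
      rw [hBnT]
      rw [div_eq_div_iff (mul_pos hsq2pi hT0).ne' hT0.ne']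
      ring
    constructor
    · rw [hfrac, le_div_iff₀ hT0, one_mul]
      exact hkey.1
    · rw [hfrac, hω2', div_le_iff₀ hT0, inv_div]
      calc (1:ℝ) ≤ T * (1 + ((n+m:ℕ):ℝ)/((n:ℝ)*m)) := hkey.2
        _ = (1 + ((n+m:ℕ):ℝ)/((n:ℝ)*m)) * T := by ring
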